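/- arXiv:2205.15669 — 2 statements merged into one kernel-verified Lean document; each statement's English description precedes it below -/
import Mathlib

section
/- Let f : ℝ^d → ℝ be γ-strongly convex and differentiable on a convex set S, and for r > 0 define the Moreau-type envelope h(x) = inf_{y ∈ S} { f(y) + (1/(2r))‖y − x‖² }. Then for every x ∈ S we have f(x) − (r/(2(1+rγ)))‖∇f(x)‖² ≤ h(x) ≤ f(x). -/
/-- Moreau-type envelope sandwich for a γ-strongly convex differentiable function on a
convex set `S`. -/
theorem moreau_envelope_sandwich
    {d : ℕ} (S : Set (EuclideanSpace ℝ (Fin d))) (hS : Convex ℝ S) (hSne : S.Nonempty)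
    (f : EuclideanSpace ℝ (Fin d) → ℝ) (f' : EuclideanSpace ℝ (Fin d) → EuclideanSpace ℝ (Fin d))
    (γ r : ℝ) (hγ : 0 < γ) (hr : 0 < r)
    (hdiff : ∀ x ∈ S, HasGradientWithinAt f (f' x) S x)
    (hstrong : ∀ x ∈ S, ∀ y ∈ S,
      f x + inner ℝ (f' x) (y - x) + γ / 2 * ‖y - x‖ ^ 2 ≤ f y)
    (h : EuclideanSpace ℝ (Fin d) → ℝ)
    (hdef : ∀ x, h x = sInf ((fun y => f y + 1 / (2 * r) * ‖y - x‖ ^ 2) '' S)) :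
    ∀ x ∈ S,
      f x - r / (2 * (1 + r * γ)) * ‖f' x‖ ^ 2 ≤ h x ∧ h x ≤ f x := by
  intro x hx
  have hpos : 0 < 1 + r * γ := by nlinarith
  have key : ∀ z ∈ (fun y => f y + 1 / (2 * r) * ‖y - x‖ ^ 2) '' S,
      f x - r / (2 * (1 + r * γ)) * ‖f' x‖ ^ 2 ≤ z := by
    rintro z ⟨y, hy, rfl⟩
    have h1 := hstrong x hx y hy
    have h2 : -(‖f' x‖ * ‖y - x‖) ≤ inner ℝ (f' x) (y - x) := by
      have := abs_real_inner_le_norm (f' x) (y - x)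
      linarith [(abs_le.mp this).1]
    set t := ‖y - x‖ with ht'
    set a := ‖f' x‖ with ha'
    have ht : 0 ≤ t := norm_nonneg _
    have ha : 0 ≤ a := norm_nonneg _
    have e1 : r / (2 * (1 + r * γ)) * a ^ 2 * (2 * (1 + r * γ)) = r * a ^ 2 := by
      field_simp
    have e2 : 1 / (2 * r) * t ^ 2 * (2 * r) = t ^ 2 := by
      field_simp
    simp only []
    nlinarith [sq_nonneg ((1 + r * γ) * t - r * a), mul_pos hr hpos, sq_nonneg t,
      mul_pos (mul_pos hr hr) hγ]
  have hne : ((fun y => f y + 1 / (2 * r) * ‖y - x‖ ^ 2) '' S).Nonempty :=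
    hSne.image _
  have hbdd : BddBelow ((fun y => f y + 1 / (2 * r) * ‖y - x‖ ^ 2) '' S) :=
    ⟨_, key⟩
  constructor
  · rw [hdef]
    exact le_csInf hne key
  · rw [hdef]
    have hmem : f x ∈ (fun y => f y + 1 / (2 * r) * ‖y - x‖ ^ 2) '' S := by
      refine ⟨x, hx, ?_⟩
      simp
    exact csInf_le hbdd hmem
end

section
/- Fix γ > 0, a symmetric cost matrix M ∈ ℝ^{d×d}, and q ∈ S₁(d). Define the Fenchel–Legendre dual of entropic OT: W*_{γ,q}(z) = max_{p ∈ S₁(d)} { ⟨z, p⟩ − W_γ(q, p) }. Then W*_{γ,q} is differentiable and its gradient is (1/γ)-Lipschitz in the Euclidean norm, with components [∇W*_{γ,q}(z)]_l = Σ_{j=1}^d [q]_j · exp((z_l − M_{lj})/γ) / Σ_{i=1}^d exp((z_i − M_{ij})/γ); in particular ∇W*_{γ,q}(z) ∈ S₁(d). -/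
open scoped InnerProductSpace

/-- Transport plans between `p` and `q`. -/
def transportPlansE {d : ℕ} (p q : EuclideanSpace ℝ (Fin d)) :
    Set (Matrix (Fin d) (Fin d) ℝ) :=
  {X | (∀ i j, 0 ≤ X i j) ∧ (∀ i, ∑ j, X i j = p i) ∧ (∀ j, ∑ i, X i j = q j)}

/-- Entropic optimal transport cost. -/
noncomputable def entOTCostE {d : ℕ} (γ : ℝ) (M : Matrix (Fin d) (Fin d) ℝ)
    (q p : EuclideanSpace ℝ (Fin d)) : ℝ :=
  sInf ((fun X : Matrix (Fin d) (Fin d) ℝ =>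
    ∑ i, ∑ j, M i j * X i j + γ * ∑ i, ∑ j, X i j * Real.log (X i j)) ''
      transportPlansE p q)

/-- The Fenchel–Legendre dual of entropic OT over the simplex. -/
noncomputable def entOTDual {d : ℕ} (γ : ℝ) (M : Matrix (Fin d) (Fin d) ℝ)
    (q : EuclideanSpace ℝ (Fin d)) (z : EuclideanSpace ℝ (Fin d)) : ℝ :=
  sSup ((fun p => ⟪z, p⟫_ℝ - entOTCostE γ M q p) ''
    {p : EuclideanSpace ℝ (Fin d) | (∀ l, 0 ≤ p l ∧ p l ≤ 1) ∧ ∑ l, p l = 1})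

open Real Finset

namespace EntOT
variable {d : ℕ}

noncomputable def ZZ (γ : ℝ) (M : Matrix (Fin d) (Fin d) ℝ) (j : Fin d)
    (z : EuclideanSpace ℝ (Fin d)) : ℝ :=
  ∑ i, Real.exp ((z i - M i j) / γ)

noncomputable def sm (γ : ℝ) (M : Matrix (Fin d) (Fin d) ℝ) (j : Fin d)
    (z : EuclideanSpace ℝ (Fin d)) : EuclideanSpace ℝ (Fin d) :=
  (WithLp.equiv 2 _).symm (fun i => Real.exp ((z i - M i j) / γ) / ZZ γ M j z)

lemma sm_apply (γ : ℝ) (M : Matrix (Fin d) (Fin d) ℝ) (j : Fin d)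
    (z : EuclideanSpace ℝ (Fin d)) (i : Fin d) :
    sm γ M j z i = Real.exp ((z i - M i j) / γ) / ZZ γ M j z := rfl

lemma ZZ_pos (hd : 0 < d) (γ : ℝ) (M : Matrix (Fin d) (Fin d) ℝ) (j : Fin d)
    (z : EuclideanSpace ℝ (Fin d)) : 0 < ZZ γ M j z := by
  have : Nonempty (Fin d) := ⟨⟨0, hd⟩⟩
  exact Finset.sum_pos (fun i _ => Real.exp_pos _) Finset.univ_nonempty

lemma sm_nonneg (hd : 0 < d) (γ : ℝ) (M : Matrix (Fin d) (Fin d) ℝ) (j : Fin d)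
    (z : EuclideanSpace ℝ (Fin d)) (i : Fin d) : 0 ≤ sm γ M j z i :=
  div_nonneg (Real.exp_pos _).le (ZZ_pos hd γ M j z).le

lemma sm_sum (hd : 0 < d) (γ : ℝ) (M : Matrix (Fin d) (Fin d) ℝ) (j : Fin d)
    (z : EuclideanSpace ℝ (Fin d)) : ∑ i, sm γ M j z i = 1 := by
  simp only [sm_apply, ← Finset.sum_div]
  exact div_self (ZZ_pos hd γ M j z).ne'

lemma sm_le_one (hd : 0 < d) (γ : ℝ) (M : Matrix (Fin d) (Fin d) ℝ) (j : Fin d)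
    (z : EuclideanSpace ℝ (Fin d)) (i : Fin d) : sm γ M j z i ≤ 1 := by
  rw [sm_apply, div_le_one (ZZ_pos hd γ M j z)]
  exact Finset.single_le_sum (f := fun i => Real.exp ((z i - M i j)/γ))
    (fun i _ => (Real.exp_pos _).le) (Finset.mem_univ i)

noncomputable def FF (γ : ℝ) (M : Matrix (Fin d) (Fin d) ℝ)
    (q z : EuclideanSpace ℝ (Fin d)) : ℝ :=
  ∑ j, (γ * q j * Real.log (ZZ γ M j z) - γ * q j * Real.log (q j))

noncomputable def Gdef (γ : ℝ) (M : Matrix (Fin d) (Fin d) ℝ)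
    (q z : EuclideanSpace ℝ (Fin d)) : EuclideanSpace ℝ (Fin d) :=
  (WithLp.equiv 2 _).symm (fun l => ∑ j, q j * sm γ M j z l)

lemma Gdef_apply (γ : ℝ) (M : Matrix (Fin d) (Fin d) ℝ)
    (q z : EuclideanSpace ℝ (Fin d)) (l : Fin d) :
    Gdef γ M q z l = ∑ j, q j * sm γ M j z l := rfl

lemma xlogx_lb {x : ℝ} (hx : 0 ≤ x) : -Real.exp (-1) ≤ x * Real.log x := by
  rcases eq_or_lt_of_le hx with h | h
  · simp [← h]; positivity
  · have h1 : 0 < Real.exp (-1) / x := by positivity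
    have h2 := Real.log_le_sub_one_of_pos h1
    rw [Real.log_div (Real.exp_ne_zero _) h.ne', Real.log_exp] at h2
    nlinarith [mul_le_mul_of_nonneg_left h2 h.le,
      mul_div_cancel₀ (Real.exp (-1)) h.ne']

lemma logsum (x y : Fin d → ℝ) (hx : ∀ i, 0 ≤ x i) (hy : ∀ i, 0 < y i) :
    ∑ i, x i * (Real.log (y i) - Real.log (x i)) ≤
      (∑ i, x i) * Real.log (∑ i, y i) - (∑ i, x i) * Real.log (∑ i, x i) := by
  rcases isEmpty_or_nonempty (Fin d) with hE | hE
  · simp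
  set c := ∑ i, x i with hc
  set S := ∑ i, y i with hS
  have hS0 : 0 < S := Finset.sum_pos (fun i _ => hy i) Finset.univ_nonempty
  have hc0 : 0 ≤ c := Finset.sum_nonneg fun i _ => hx i
  rcases eq_or_lt_of_le hc0 with hc0' | hc0'
  · have hall : ∀ i ∈ Finset.univ, x i = 0 :=
      fun i _ => le_antisymm (by
        rw [hc] at hc0'
        exact (Finset.sum_eq_zero_iff_of_nonneg (fun i _ => hx i)).mp hc0'.symm i
          (Finset.mem_univ i) ▸ le_rfl) (hx i)
    have : ∀ i ∈ Finset.univ, x i * (Real.log (y i) - Real.log (x i)) = 0 := by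
      intro i hi; rw [hall i hi]; ring
    rw [Finset.sum_congr rfl this]
    simp [← hc0']
  · have key : ∀ i, x i * (Real.log (y i) - Real.log (x i)) ≤
        y i * c / S - x i + x i * (Real.log S - Real.log c) := by
      intro i
      rcases eq_or_lt_of_le (hx i) with h | h
      · rw [← h]; simp
        have := div_nonneg (mul_nonneg (hy i).le hc0) hS0.le
        linarith
      · have h1 : 0 < y i * c / (x i * S) := div_pos (mul_pos (hy i) hc0') (mul_pos h hS0)
        have h2 := Real.log_le_sub_one_of_pos h1
        rw [Real.log_div (mul_pos (hy i) hc0').ne' (mul_pos h hS0).ne',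
          Real.log_mul (hy i).ne' hc0'.ne', Real.log_mul h.ne' hS0.ne'] at h2
        have h3 : x i * (y i * c / (x i * S)) = y i * c / S := by
          field_simp
        nlinarith [mul_le_mul_of_nonneg_left h2 h.le]
    calc ∑ i, x i * (Real.log (y i) - Real.log (x i))
        ≤ ∑ i, (y i * c / S - x i + x i * (Real.log S - Real.log c)) :=
          Finset.sum_le_sum fun i _ => key i
      _ = S * c / S - c + c * (Real.log S - Real.log c) := by
          rw [Finset.sum_add_distrib, Finset.sum_sub_distrib, ← Finset.sum_div,
            ← Finset.sum_mul, ← Finset.sum_mul]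
      _ = c * Real.log S - c * Real.log c := by
          field_simp; ring

/-- The fundamental inequality: for any coupling X with column sums q. -/
lemma key_ineq (hd : 0 < d) {γ : ℝ} (hγ : 0 < γ) (M : Matrix (Fin d) (Fin d) ℝ)
    (q z : EuclideanSpace ℝ (Fin d)) (X : Matrix (Fin d) (Fin d) ℝ)
    (hX0 : ∀ i j, 0 ≤ X i j) (hXc : ∀ j, ∑ i, X i j = q j) :
    ∑ i, ∑ j, z i * X i j ≤
      (∑ i, ∑ j, M i j * X i j + γ * ∑ i, ∑ j, X i j * Real.log (X i j)) + FF γ M q z := by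
  have col : ∀ j, ∑ i, X i j * ((z i - M i j)/γ - Real.log (X i j)) ≤
      q j * Real.log (ZZ γ M j z) - q j * Real.log (q j) := by
    intro j
    have h := logsum (fun i => X i j) (fun i => Real.exp ((z i - M i j)/γ))
      (fun i => hX0 i j) (fun i => Real.exp_pos _)
    simp only [Real.log_exp] at h
    rw [hXc j] at h
    exact h
  have colsum := Finset.sum_le_sum (fun j (_ : j ∈ Finset.univ) => col j)
  have h2 := mul_le_mul_of_nonneg_left colsum hγ.le
  have lhs_eq : γ * ∑ j, ∑ i, X i j * ((z i - M i j)/γ - Real.log (X i j)) =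
      ∑ i, ∑ j, z i * X i j -
        (∑ i, ∑ j, M i j * X i j + γ * ∑ i, ∑ j, X i j * Real.log (X i j)) := by
    rw [Finset.sum_comm (f := fun j i => X i j * ((z i - M i j)/γ - Real.log (X i j)))]
    simp only [Finset.mul_sum]
    have e : ∀ i j : Fin d, γ * (X i j * ((z i - M i j)/γ - Real.log (X i j))) =
        z i * X i j - (M i j * X i j + γ * (X i j * Real.log (X i j))) := by
      intro i j; field_simp; ring
    simp only [e, Finset.sum_sub_distrib, Finset.sum_add_distrib, ← Finset.mul_sum]
  have rhs_eq : γ * ∑ j, (q j * Real.log (ZZ γ M j z) - q j * Real.log (q j)) =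
      FF γ M q z := by
    rw [FF, Finset.mul_sum]
    apply Finset.sum_congr rfl
    intro j _
    ring
  rw [lhs_eq, rhs_eq] at h2
  linarith

end EntOT

namespace EntOT
variable {d : ℕ}

lemma prod_mem_plans (p q : EuclideanSpace ℝ (Fin d))
    (hp : (∀ l, 0 ≤ p l ∧ p l ≤ 1) ∧ ∑ l, p l = 1)
    (hq : (∀ l, 0 ≤ q l ∧ q l ≤ 1) ∧ ∑ l, q l = 1) :
    (fun i j => p i * q j) ∈ transportPlansE p q := by
  refine ⟨fun i j => mul_nonneg (hp.1 i).1 (hq.1 j).1, fun i => ?_, fun j => ?_⟩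
  · rw [← Finset.mul_sum, hq.2, mul_one]
  · rw [← Finset.sum_mul, hp.2, one_mul]

lemma inner_eq_sum (z p : EuclideanSpace ℝ (Fin d)) : ⟪z, p⟫_ℝ = ∑ i, z i * p i := by
  simp [PiLp.inner_apply, RCLike.inner_apply, conj_trivial]
  exact Finset.sum_congr rfl fun i _ => mul_comm _ _

lemma inner_sub_cost_le (hd : 0 < d) {γ : ℝ} (hγ : 0 < γ) (M : Matrix (Fin d) (Fin d) ℝ)
    (q z p : EuclideanSpace ℝ (Fin d))
    (hp : (∀ l, 0 ≤ p l ∧ p l ≤ 1) ∧ ∑ l, p l = 1)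
    (hq : (∀ l, 0 ≤ q l ∧ q l ≤ 1) ∧ ∑ l, q l = 1) :
    ⟪z, p⟫_ℝ - entOTCostE γ M q p ≤ FF γ M q z := by
  have h1 : ⟪z, p⟫_ℝ - FF γ M q z ≤ entOTCostE γ M q p := by
    unfold entOTCostE
    have hne : ((fun X : Matrix (Fin d) (Fin d) ℝ =>
        ∑ i, ∑ j, M i j * X i j + γ * ∑ i, ∑ j, X i j * Real.log (X i j)) ''
          transportPlansE p q).Nonempty :=
      ⟨_, Set.mem_image_of_mem _ (prod_mem_plans p q hp hq)⟩
    apply le_csInf hne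
    rintro b ⟨X, ⟨hX0, hXr, hXc⟩, rfl⟩
    dsimp only
    have key := key_ineq hd hγ M q z X hX0 hXc
    have hinner : ⟪z, p⟫_ℝ = ∑ i, ∑ j, z i * X i j := by
      rw [inner_eq_sum]
      exact Finset.sum_congr rfl fun i _ => by rw [← hXr i, Finset.mul_sum]
    rw [hinner]
    linarith
  linarith

lemma cost_bddBelow {γ : ℝ} (hγ : 0 < γ) (M : Matrix (Fin d) (Fin d) ℝ)
    (q p : EuclideanSpace ℝ (Fin d))
    (hq : (∀ l, 0 ≤ q l ∧ q l ≤ 1) ∧ ∑ l, q l = 1) :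
    BddBelow ((fun X : Matrix (Fin d) (Fin d) ℝ =>
      ∑ i, ∑ j, M i j * X i j + γ * ∑ i, ∑ j, X i j * Real.log (X i j)) ''
        transportPlansE p q) := by
  refine ⟨∑ i : Fin d, ∑ j : Fin d, -|M i j| + γ * ∑ i : Fin d, ∑ j : Fin d, -Real.exp (-1), ?_⟩
  rintro b ⟨X, ⟨hX0, hXr, hXc⟩, rfl⟩
  have hX1 : ∀ i j, X i j ≤ 1 := by
    intro i j
    calc X i j ≤ ∑ i', X i' j :=
          Finset.single_le_sum (fun i' _ => hX0 i' j) (Finset.mem_univ i)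
      _ = q j := hXc j
      _ ≤ 1 := (hq.1 j).2
  apply add_le_add
  · apply Finset.sum_le_sum; intro i _; apply Finset.sum_le_sum; intro j _
    rcases le_or_gt 0 (M i j) with h | h
    · have : 0 ≤ M i j * X i j := mul_nonneg h (hX0 i j)
      have := neg_abs_le (M i j)
      nlinarith [abs_nonneg (M i j)]
    · have habs : |M i j| = -(M i j) := abs_of_neg h
      nlinarith [hX0 i j, hX1 i j]
  · apply mul_le_mul_of_nonneg_left _ hγ.le
    apply Finset.sum_le_sum; intro i _; apply Finset.sum_le_sum; intro j _
    exact xlogx_lb (hX0 i j)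

lemma Gdef_mem (hd : 0 < d) {γ : ℝ} (hγ : 0 < γ) (M : Matrix (Fin d) (Fin d) ℝ)
    (q z : EuclideanSpace ℝ (Fin d))
    (hq : (∀ l, 0 ≤ q l ∧ q l ≤ 1) ∧ ∑ l, q l = 1) :
    (∀ l, 0 ≤ Gdef γ M q z l ∧ Gdef γ M q z l ≤ 1) ∧ ∑ l, Gdef γ M q z l = 1 := by
  constructor
  · intro l
    rw [Gdef_apply]
    refine ⟨Finset.sum_nonneg fun j _ => mul_nonneg (hq.1 j).1 (sm_nonneg hd γ M j z l), ?_⟩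
    calc ∑ j, q j * sm γ M j z l
        ≤ ∑ j, q j * 1 := Finset.sum_le_sum fun j _ =>
          mul_le_mul_of_nonneg_left (sm_le_one hd γ M j z l) (hq.1 j).1
      _ = 1 := by simp [hq.2]
  · calc ∑ l, Gdef γ M q z l = ∑ l, ∑ j, q j * sm γ M j z l := rfl
      _ = ∑ j, ∑ l, q j * sm γ M j z l := Finset.sum_comm
      _ = ∑ j, q j * ∑ l, sm γ M j z l := by simp [Finset.mul_sum]
      _ = ∑ j, q j := by simp [sm_sum hd]
      _ = 1 := hq.2

noncomputable def Xstar (γ : ℝ) (M : Matrix (Fin d) (Fin d) ℝ)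
    (q z : EuclideanSpace ℝ (Fin d)) : Matrix (Fin d) (Fin d) ℝ :=
  fun i j => q j * sm γ M j z i

lemma Xstar_mem (hd : 0 < d) {γ : ℝ} (hγ : 0 < γ) (M : Matrix (Fin d) (Fin d) ℝ)
    (q z : EuclideanSpace ℝ (Fin d))
    (hq : (∀ l, 0 ≤ q l ∧ q l ≤ 1) ∧ ∑ l, q l = 1) :
    Xstar γ M q z ∈ transportPlansE (Gdef γ M q z) q := by
  refine ⟨fun i j => mul_nonneg (hq.1 j).1 (sm_nonneg hd γ M j z i),
    fun i => rfl, fun j => ?_⟩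
  rw [show ∑ i, Xstar γ M q z i j = q j * ∑ i, sm γ M j z i by
    rw [Finset.mul_sum]; rfl]
  rw [sm_sum hd, mul_one]

lemma fXstar (hd : 0 < d) {γ : ℝ} (hγ : 0 < γ) (M : Matrix (Fin d) (Fin d) ℝ)
    (q z : EuclideanSpace ℝ (Fin d))
    (hq : (∀ l, 0 ≤ q l ∧ q l ≤ 1) ∧ ∑ l, q l = 1) :
    ∑ i, ∑ j, M i j * Xstar γ M q z i j
      + γ * ∑ i, ∑ j, Xstar γ M q z i j * Real.log (Xstar γ M q z i j)
      = ⟪z, Gdef γ M q z⟫_ℝ - FF γ M q z := by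
  have col : ∀ j, ∑ i, (M i j * Xstar γ M q z i j
      + γ * (Xstar γ M q z i j * Real.log (Xstar γ M q z i j)))
      = ∑ i, z i * Xstar γ M q z i j
        - (γ * q j * Real.log (ZZ γ M j z) - γ * q j * Real.log (q j)) := by
    intro j
    rcases eq_or_lt_of_le (hq.1 j).1 with h0 | h0
    · have hz : ∀ i, Xstar γ M q z i j = 0 := by
        intro i; simp [Xstar, ← h0]
      simp [hz, ← h0]
    · have hterm : ∀ i, M i j * Xstar γ M q z i j
          + γ * (Xstar γ M q z i j * Real.log (Xstar γ M q z i j))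
          = z i * Xstar γ M q z i j
            + Xstar γ M q z i j * (γ * Real.log (q j) - γ * Real.log (ZZ γ M j z)) := by
        intro i
        have hlog : Real.log (Xstar γ M q z i j) =
            Real.log (q j) + (z i - M i j)/γ - Real.log (ZZ γ M j z) := by
          rw [show Xstar γ M q z i j = q j * (Real.exp ((z i - M i j)/γ) / ZZ γ M j z) from rfl]
          rw [Real.log_mul h0.ne' (div_pos (Real.exp_pos _) (ZZ_pos hd γ M j z)).ne',
            Real.log_div (Real.exp_ne_zero _)
            (ZZ_pos hd γ M j z).ne', Real.log_exp]
          ring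
        rw [hlog]
        field_simp
        ring
      rw [Finset.sum_congr rfl fun i _ => hterm i, Finset.sum_add_distrib,
        ← Finset.sum_mul]
      have hcolsum : ∑ i, Xstar γ M q z i j = q j := by
        rw [show ∑ i, Xstar γ M q z i j = q j * ∑ i, sm γ M j z i by
          rw [Finset.mul_sum]; rfl, sm_sum hd, mul_one]
      rw [hcolsum]
      ring
  calc ∑ i, ∑ j, M i j * Xstar γ M q z i j
      + γ * ∑ i, ∑ j, Xstar γ M q z i j * Real.log (Xstar γ M q z i j)
      = ∑ i, ∑ j, (M i j * Xstar γ M q z i j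
        + γ * (Xstar γ M q z i j * Real.log (Xstar γ M q z i j))) := by
        simp only [Finset.sum_add_distrib, Finset.mul_sum]
    _ = ∑ j, ∑ i, (M i j * Xstar γ M q z i j
        + γ * (Xstar γ M q z i j * Real.log (Xstar γ M q z i j))) := Finset.sum_comm
    _ = ∑ j, (∑ i, z i * Xstar γ M q z i j
        - (γ * q j * Real.log (ZZ γ M j z) - γ * q j * Real.log (q j))) :=
        Finset.sum_congr rfl fun j _ => col j
    _ = ∑ j, ∑ i, z i * Xstar γ M q z i j - FF γ M q z := by
        rw [Finset.sum_sub_distrib]; rfl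
    _ = ⟪z, Gdef γ M q z⟫_ℝ - FF γ M q z := by
        congr 1
        rw [inner_eq_sum, Finset.sum_comm]
        exact Finset.sum_congr rfl fun i _ => by
          rw [show Gdef γ M q z i = ∑ j, q j * sm γ M j z i from rfl, Finset.mul_sum]; rfl

lemma dual_eq (hd : 0 < d) {γ : ℝ} (hγ : 0 < γ) (M : Matrix (Fin d) (Fin d) ℝ)
    (q z : EuclideanSpace ℝ (Fin d))
    (hq : (∀ l, 0 ≤ q l ∧ q l ≤ 1) ∧ ∑ l, q l = 1) :
    entOTDual γ M q z = FF γ M q z := by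
  unfold entOTDual
  have hne : ((fun p => ⟪z, p⟫_ℝ - entOTCostE γ M q p) ''
      {p : EuclideanSpace ℝ (Fin d) | (∀ l, 0 ≤ p l ∧ p l ≤ 1) ∧ ∑ l, p l = 1}).Nonempty :=
    ⟨_, Set.mem_image_of_mem _ (show q ∈ _ from hq)⟩
  apply le_antisymm
  · apply csSup_le hne
    rintro b ⟨p, hp, rfl⟩
    exact inner_sub_cost_le hd hγ M q z p hp hq
  · have hGmem := Gdef_mem hd hγ M q z hq
    have h1 : entOTCostE γ M q (Gdef γ M q z) ≤ ⟪z, Gdef γ M q z⟫_ℝ - FF γ M q z := by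
      rw [← fXstar hd hγ M q z hq]
      unfold entOTCostE
      exact csInf_le (cost_bddBelow hγ M q _ hq) ⟨Xstar γ M q z, Xstar_mem hd hγ M q z hq, rfl⟩
    have h2 : FF γ M q z ≤ ⟪z, Gdef γ M q z⟫_ℝ - entOTCostE γ M q (Gdef γ M q z) := by
      linarith
    refine le_trans h2 (le_csSup ?_ ⟨Gdef γ M q z, hGmem, rfl⟩)
    exact ⟨FF γ M q z, by rintro b ⟨p, hp, rfl⟩; exact inner_sub_cost_le hd hγ M q z p hp hq⟩

end EntOT

namespace EntOT
variable {d : ℕ}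

lemma hasGradFF (hd : 0 < d) {γ : ℝ} (hγ : 0 < γ) (M : Matrix (Fin d) (Fin d) ℝ)
    (q z : EuclideanSpace ℝ (Fin d)) :
    HasGradientAt (FF γ M q) (Gdef γ M q z) z := by
  rw [hasGradientAt_iff_hasFDerivAt]
  have hlin : ∀ i j : Fin d, HasFDerivAt (fun w : EuclideanSpace ℝ (Fin d) => (w i - M i j)/γ)
      (γ⁻¹ • (EuclideanSpace.proj i : EuclideanSpace ℝ (Fin d) →L[ℝ] ℝ)) z := by
    intro i j
    simpa [div_eq_mul_inv, mul_comm] using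
      (((EuclideanSpace.proj (𝕜 := ℝ) i).hasFDerivAt (x := z)).sub_const (M i j)).mul_const γ⁻¹
  have hexp : ∀ i j : Fin d,
      HasFDerivAt (fun w : EuclideanSpace ℝ (Fin d) => Real.exp ((w i - M i j)/γ))
        (Real.exp ((z i - M i j)/γ) • (γ⁻¹ • (EuclideanSpace.proj i :
          EuclideanSpace ℝ (Fin d) →L[ℝ] ℝ))) z := fun i j => (hlin i j).exp
  have hZ : ∀ j : Fin d, HasFDerivAt (ZZ γ M j)
      (∑ i, Real.exp ((z i - M i j)/γ) • (γ⁻¹ • (EuclideanSpace.proj i :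
        EuclideanSpace ℝ (Fin d) →L[ℝ] ℝ))) z := by
    intro j
    exact HasFDerivAt.fun_sum (fun i _ => hexp i j)
  have hterm : ∀ j : Fin d, HasFDerivAt
      (fun w => γ * q j * Real.log (ZZ γ M j w) - γ * q j * Real.log (q j))
      ((γ * q j) • ((ZZ γ M j z)⁻¹ • ∑ i, Real.exp ((z i - M i j)/γ) • (γ⁻¹ •
        (EuclideanSpace.proj i : EuclideanSpace ℝ (Fin d) →L[ℝ] ℝ)))) z := by
    intro j
    exact (((hZ j).log (ZZ_pos hd γ M j z).ne').const_mul (γ * q j)).sub_const _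
  have hsum := HasFDerivAt.fun_sum (fun j (_ : j ∈ Finset.univ) => hterm j)
  have hFF : HasFDerivAt (FF γ M q)
      (∑ j, (γ * q j) • ((ZZ γ M j z)⁻¹ • ∑ i, Real.exp ((z i - M i j)/γ) • (γ⁻¹ •
        (EuclideanSpace.proj i : EuclideanSpace ℝ (Fin d) →L[ℝ] ℝ)))) z := hsum
  apply hFF.congr_fderiv
  apply ContinuousLinearMap.ext
  intro v
  simp only [ContinuousLinearMap.sum_apply, ContinuousLinearMap.smul_apply,
    PiLp.proj_apply, smul_eq_mul, InnerProductSpace.toDual_apply_apply]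
  rw [inner_eq_sum]
  simp only [Finset.mul_sum]
  rw [Finset.sum_comm]
  apply Finset.sum_congr rfl
  intro i _
  rw [Gdef_apply, Finset.sum_mul]
  apply Finset.sum_congr rfl
  intro j _
  rw [sm_apply]
  field_simp [(ZZ_pos hd γ M j z).ne']

end EntOT
variable {d : ℕ}

namespace EntOT
variable {d : ℕ}

lemma covCS (s u v : Fin d → ℝ) (hs : ∀ l, 0 ≤ s l) (hs1 : ∑ l, s l = 1) :
    |∑ l, s l * (u l * v l) - (∑ l, s l * u l) * (∑ l, s l * v l)| ≤
      Real.sqrt (∑ l, (u l)^2) * Real.sqrt (∑ l, (v l)^2) := by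
  have hsle : ∀ l, s l ≤ 1 := fun l =>
    hs1 ▸ Finset.single_le_sum (fun l _ => hs l) (Finset.mem_univ l)
  set ub := ∑ l, s l * u l with hub
  set vb := ∑ l, s l * v l with hvb
  set a := fun l => Real.sqrt (s l) * (u l - ub) with ha
  set b := fun l => Real.sqrt (s l) * (v l - vb) with hb
  have hsq : ∀ l, Real.sqrt (s l) * Real.sqrt (s l) = s l :=
    fun l => Real.mul_self_sqrt (hs l)
  have hid : ∑ l, s l * (u l * v l) - ub * vb = ∑ l, a l * b l := by
    have e : ∀ l, a l * b l =
        s l * (u l * v l) - (s l * u l) * vb - (s l * v l) * ub + s l * (ub * vb) := by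
      intro l
      simp only [ha, hb]
      rw [mul_mul_mul_comm, hsq l]
      ring
    rw [Finset.sum_congr rfl fun l _ => e l]
    simp only [Finset.sum_add_distrib, Finset.sum_sub_distrib, ← Finset.sum_mul]
    rw [← hub, ← hvb, hs1]
    ring
  have haa : ∑ l, (a l)^2 ≤ ∑ l, (u l)^2 := by
    have e : ∀ l, (a l)^2 = s l * (u l)^2 - 2*((s l * u l)*ub) + s l * ub^2 := by
      intro l
      simp only [ha]
      rw [mul_pow, Real.sq_sqrt (hs l)]
      ring
    have e2 : ∑ l, (a l)^2 = ∑ l, s l * (u l)^2 - ub^2 := by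
      rw [Finset.sum_congr rfl fun l _ => e l]
      simp only [Finset.sum_add_distrib, Finset.sum_sub_distrib, ← Finset.sum_mul,
        ← Finset.mul_sum]
      rw [← hub, hs1]
      ring
    have e3 : ∑ l, s l * (u l)^2 ≤ ∑ l, (u l)^2 :=
      Finset.sum_le_sum fun l _ => by nlinarith [hsle l, hs l, sq_nonneg (u l)]
    nlinarith [sq_nonneg ub]
  have hbb : ∑ l, (b l)^2 ≤ ∑ l, (v l)^2 := by
    have e : ∀ l, (b l)^2 = s l * (v l)^2 - 2*((s l * v l)*vb) + s l * vb^2 := by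
      intro l
      simp only [hb]
      rw [mul_pow, Real.sq_sqrt (hs l)]
      ring
    have e2 : ∑ l, (b l)^2 = ∑ l, s l * (v l)^2 - vb^2 := by
      rw [Finset.sum_congr rfl fun l _ => e l]
      simp only [Finset.sum_add_distrib, Finset.sum_sub_distrib, ← Finset.sum_mul,
        ← Finset.mul_sum]
      rw [← hvb, hs1]
      ring
    have e3 : ∑ l, s l * (v l)^2 ≤ ∑ l, (v l)^2 :=
      Finset.sum_le_sum fun l _ => by nlinarith [hsle l, hs l, sq_nonneg (v l)]
    nlinarith [sq_nonneg vb]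
  have hCS := Finset.sum_mul_sq_le_sq_mul_sq Finset.univ a b
  have hana : 0 ≤ ∑ l, (a l)^2 := Finset.sum_nonneg fun l _ => sq_nonneg _
  have hbnb : 0 ≤ ∑ l, (b l)^2 := Finset.sum_nonneg fun l _ => sq_nonneg _
  calc |∑ l, s l * (u l * v l) - ub * vb| = |∑ l, a l * b l| := by rw [hid]
    _ = Real.sqrt ((∑ l, a l * b l)^2) := (Real.sqrt_sq_eq_abs _).symm
    _ ≤ Real.sqrt ((∑ l, (a l)^2) * (∑ l, (b l)^2)) := Real.sqrt_le_sqrt hCS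
    _ = Real.sqrt (∑ l, (a l)^2) * Real.sqrt (∑ l, (b l)^2) := Real.sqrt_mul hana _
    _ ≤ Real.sqrt (∑ l, (u l)^2) * Real.sqrt (∑ l, (v l)^2) :=
        mul_le_mul (Real.sqrt_le_sqrt haa) (Real.sqrt_le_sqrt hbb)
          (Real.sqrt_nonneg _) (Real.sqrt_nonneg _)

lemma alg_aux (γ E Sc U V t : ℝ) (hg : γ ≠ 0) (hS0 : Sc ≠ 0) :
    1/γ * (E / Sc * (U * V) - E / Sc * V * (t / Sc))
      = V * ((E * (U/γ) * Sc - E * (t/γ)) / Sc^2) := by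
  field_simp

lemma norm_eq_sqrt_sq (x : EuclideanSpace ℝ (Fin d)) :
    ‖x‖ = Real.sqrt (∑ l, (x l)^2) := by
  rw [EuclideanSpace.norm_eq]
  congr 1
  exact Finset.sum_congr rfl fun l _ => by rw [Real.norm_eq_abs, sq_abs]

lemma sm_lip (hd : 0 < d) {γ : ℝ} (hγ : 0 < γ) (M : Matrix (Fin d) (Fin d) ℝ)
    (j : Fin d) (z w : EuclideanSpace ℝ (Fin d)) :
    ‖sm γ M j z - sm γ M j w‖ ≤ 1/γ * ‖z - w‖ := by
  set u : Fin d → ℝ := fun l => z l - w l with hu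
  set W : Fin d → ℝ := fun l => sm γ M j z l - sm γ M j w l with hW
  have hnormW : ‖sm γ M j z - sm γ M j w‖ = Real.sqrt (∑ l, (W l)^2) := by
    rw [norm_eq_sqrt_sq]
    congr 1
  have hnormu : ‖z - w‖ = Real.sqrt (∑ l, (u l)^2) := by
    rw [norm_eq_sqrt_sq]
    congr 1
  set e : Fin d → ℝ → ℝ := fun l t => Real.exp ((w l + t * u l - M l j)/γ) with he
  set S : ℝ → ℝ := fun t => ∑ l, e l t with hS
  have hSpos : ∀ t, 0 < S t := by
    intro t
    have : Nonempty (Fin d) := ⟨⟨0, hd⟩⟩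
    rw [hS]
    exact Finset.sum_pos (fun l _ => Real.exp_pos _) Finset.univ_nonempty
  have hederiv : ∀ l t, HasDerivAt (e l) (e l t * (u l / γ)) t := by
    intro l t
    have h1 : HasDerivAt (fun t : ℝ => w l + t * u l - M l j) (u l) t := by
      simpa using (((hasDerivAt_id t).mul_const (u l)).const_add (w l)).sub_const (M l j)
    have h2 := (h1.div_const γ).exp
    rw [he]
    simpa [mul_comm, mul_div_assoc] using h2
  have hSderiv : ∀ t, HasDerivAt S (∑ l, e l t * (u l / γ)) t := by
    intro t
    rw [hS]
    exact HasDerivAt.fun_sum fun l _ => hederiv l t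
  set h : ℝ → ℝ := fun t => ∑ l, W l * (e l t / S t) with hh
  set h' : ℝ → ℝ := fun t => ∑ l, W l * ((e l t * (u l / γ) * S t
    - e l t * ∑ k, e k t * (u k / γ)) / (S t)^2) with hh'
  have hhderiv : ∀ t, HasDerivAt h (h' t) t := by
    intro t
    rw [hh, hh']
    exact HasDerivAt.fun_sum fun l _ =>
      ((hederiv l t).div (hSderiv t) (hSpos t).ne').const_mul (W l)
  obtain ⟨c, _, hc⟩ := exists_hasDerivAt_eq_slope h h' (by norm_num : (0:ℝ) < 1)
    (fun t _ => (hhderiv t).continuousAt.continuousWithinAt)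
    (fun t _ => hhderiv t)
  have harg1 : ∀ k, w k + 1 * u k = z k := by intro k; simp only [hu]; ring
  have harg0 : ∀ k, w k + 0 * u k = w k := by intro k; simp only [hu]; ring
  have h1eq : h 1 = ∑ l, W l * sm γ M j z l := by
    simp only [hh, hS, he, harg1, sm_apply, ZZ]
  have h0eq : h 0 = ∑ l, W l * sm γ M j w l := by
    simp only [hh, hS, he, harg0, sm_apply, ZZ]
  have hslope : h' c = ∑ l, (W l)^2 := by
    rw [hc, sub_zero, div_one, h1eq, h0eq, ← Finset.sum_sub_distrib]
    refine Finset.sum_congr rfl fun l _ => ?_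
    rw [← mul_sub, sq, hW]
  set s : Fin d → ℝ := fun l => e l c / S c with hsdef
  have hs0 : ∀ l, 0 ≤ s l := by
    intro l
    rw [hsdef]
    exact div_nonneg (by rw [he]; positivity) (hSpos c).le
  have hs1 : ∑ l, s l = 1 := by
    simp only [hsdef, ← Finset.sum_div, ← hS]
    exact div_self (hSpos c).ne'
  set T := ∑ k, e k c * u k with hT
  have hsum1 : ∑ k, e k c * (u k / γ) = T / γ := by
    rw [hT, Finset.sum_div]
    exact Finset.sum_congr rfl fun k _ => (mul_div_assoc _ _ _).symm
  have hsum2 : ∑ k, s k * u k = T / S c := by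
    rw [hT, Finset.sum_div]
    refine Finset.sum_congr rfl fun k _ => ?_
    simp only [hsdef]
    rw [div_mul_eq_mul_div]
  have hcov : 1/γ * (∑ l, s l * (u l * W l)
      - (∑ l, s l * u l) * (∑ l, s l * W l)) = h' c := by
    rw [hsum2, mul_comm (T / S c) (∑ l, s l * W l), Finset.sum_mul,
      ← Finset.sum_sub_distrib, Finset.mul_sum]
    simp only [hh']
    rw [hsum1]
    refine Finset.sum_congr rfl fun l _ => ?_
    simp only [hsdef]
    exact alg_aux γ (e l c) (S c) (u l) (W l) T hγ.ne' (hSpos c).ne'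
  have hbound := covCS s u W hs0 hs1
  have hWnn : (0:ℝ) ≤ ∑ l, (W l)^2 := Finset.sum_nonneg fun l _ => sq_nonneg _
  have key : ∑ l, (W l)^2 ≤ 1/γ *
      (Real.sqrt (∑ l, (u l)^2) * Real.sqrt (∑ l, (W l)^2)) := by
    calc ∑ l, (W l)^2 = h' c := hslope.symm
      _ = 1/γ * (∑ l, s l * (u l * W l)
          - (∑ l, s l * u l) * (∑ l, s l * W l)) := hcov.symm
      _ ≤ 1/γ * |∑ l, s l * (u l * W l)
          - (∑ l, s l * u l) * (∑ l, s l * W l)| :=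
          mul_le_mul_of_nonneg_left (le_abs_self _) (by positivity)
      _ ≤ 1/γ * (Real.sqrt (∑ l, (u l)^2) * Real.sqrt (∑ l, (W l)^2)) :=
          mul_le_mul_of_nonneg_left hbound (by positivity)
  rw [hnormW, hnormu]
  rcases eq_or_lt_of_le (Real.sqrt_nonneg (∑ l, (W l)^2)) with hA | hA
  · rw [← hA]
    positivity
  · have hAsq : Real.sqrt (∑ l, (W l)^2) ^ 2 = ∑ l, (W l)^2 := Real.sq_sqrt hWnn
    nlinarith [Real.sqrt_nonneg (∑ l, (u l)^2), hγ]

end EntOT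

namespace EntOT
variable {d : ℕ}

lemma pilp_sum_apply {ι : Type*} (s : Finset ι) (F : ι → EuclideanSpace ℝ (Fin d)) (l : Fin d) :
    (∑ j ∈ s, F j) l = ∑ j ∈ s, F j l := by
  induction s using Finset.cons_induction with
  | empty => rfl
  | cons j s hj ih =>
    rw [Finset.sum_cons, Finset.sum_cons, PiLp.add_apply, ih]

lemma Gdef_lip (hd : 0 < d) {γ : ℝ} (hγ : 0 < γ) (M : Matrix (Fin d) (Fin d) ℝ)
    (q : EuclideanSpace ℝ (Fin d)) (hq : (∀ l, 0 ≤ q l ∧ q l ≤ 1) ∧ ∑ l, q l = 1)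
    (z w : EuclideanSpace ℝ (Fin d)) :
    ‖Gdef γ M q z - Gdef γ M q w‖ ≤ 1/γ * ‖z - w‖ := by
  have hvec : Gdef γ M q z - Gdef γ M q w = ∑ j, q j • (sm γ M j z - sm γ M j w) := by
    apply PiLp.ext
    intro l
    rw [PiLp.sub_apply, pilp_sum_apply]
    rw [Gdef_apply, Gdef_apply, ← Finset.sum_sub_distrib]
    refine Finset.sum_congr rfl fun j _ => ?_
    rw [PiLp.smul_apply, PiLp.sub_apply, smul_eq_mul, mul_sub]
  rw [hvec]
  calc ‖∑ j, q j • (sm γ M j z - sm γ M j w)‖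
      ≤ ∑ j, ‖q j • (sm γ M j z - sm γ M j w)‖ := norm_sum_le _ _
    _ = ∑ j, q j * ‖sm γ M j z - sm γ M j w‖ := by
        refine Finset.sum_congr rfl fun j _ => ?_
        rw [norm_smul, Real.norm_eq_abs, abs_of_nonneg (hq.1 j).1]
    _ ≤ ∑ j, q j * (1/γ * ‖z - w‖) := Finset.sum_le_sum fun j _ =>
        mul_le_mul_of_nonneg_left (sm_lip hd hγ M j z w) (hq.1 j).1
    _ = 1/γ * ‖z - w‖ := by rw [← Finset.sum_mul, hq.2, one_mul]

end EntOT

/-- The dual of entropic OT is differentiable with `(1/γ)`-Lipschitz gradient given by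
the softmax-mixture formula, and the gradient lies in the simplex. -/
theorem entOTDual_gradient {d : ℕ} (hd : 0 < d)
    (γ : ℝ) (hγ : 0 < γ)
    (M : Matrix (Fin d) (Fin d) ℝ) (hMsymm : M.IsSymm)
    (q : EuclideanSpace ℝ (Fin d)) (hq : (∀ l, 0 ≤ q l ∧ q l ≤ 1) ∧ ∑ l, q l = 1)
    (G : EuclideanSpace ℝ (Fin d) → EuclideanSpace ℝ (Fin d))
    (hG : ∀ z l, G z l = ∑ j, q j * (Real.exp ((z l - M l j) / γ) /
      ∑ i, Real.exp ((z i - M i j) / γ))) :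
    (∀ z, HasGradientAt (entOTDual γ M q) (G z) z) ∧
    (∀ z w, ‖G z - G w‖ ≤ 1 / γ * ‖z - w‖) ∧
    (∀ z, (∀ l, 0 ≤ G z l ∧ G z l ≤ 1) ∧ ∑ l, G z l = 1) := by
  have hGeq : ∀ z, G z = EntOT.Gdef γ M q z := by
    intro z
    apply PiLp.ext
    intro l
    rw [hG z l, EntOT.Gdef_apply]
    rfl
  have hdual : entOTDual γ M q = EntOT.FF γ M q :=
    funext fun z => EntOT.dual_eq hd hγ M q z hq
  refine ⟨fun z => ?_, fun z w => ?_, fun z => ?_⟩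
  · rw [hdual, hGeq]
    exact EntOT.hasGradFF hd hγ M q z
  · rw [hGeq z, hGeq w]
    exact EntOT.Gdef_lip hd hγ M q hq z w
  · rw [hGeq z]
    exact EntOT.Gdef_mem hd hγ M q z hq
end
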